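/- Let H be a finite-dimensional real inner product space, G : H → H self-adjoint positive semidefinite, δ > 0, η > 0, s ≥ 0, and β > 0. If y, y' ∈ H satisfy (sG + δI)(y' − y)/η + βG y' = 0, then ‖y'‖ ≤ ‖y‖. -/

import Mathlib

open scoped RealInnerProductSpace

theorem stmt_7 {H : Type*} [NormedAddCommGroup H] [InnerProductSpace ℝ H]
    [FiniteDimensional ℝ H]
    (G : H →ₗ[ℝ] H) (hG : G.IsSymmetric) (hGpos : ∀ u : H, 0 ≤ ⟪G u, u⟫)
    (δ η s β : ℝ) (hδ : 0 < δ) (hη : 0 < η) (hs : 0 ≤ s) (hβ : 0 < β)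
    (y y' : H)
    (hstep : (s • G + δ • (LinearMap.id : H →ₗ[ℝ] H)) ((1 / η) • (y' - y)) + β • G y' = 0) :
    ‖y'‖ ≤ ‖y‖ := by
  -- Rearrange the step equation into `(s+ηβ)Gy' + δy' = sGy + δy`
  simp only [LinearMap.add_apply, LinearMap.smul_apply, LinearMap.id_apply, map_smul,
    map_sub] at hstep
  have key : (s + η * β) • G y' + δ • y' = s • G y + δ • y := by
    have h := congrArg (fun v : H => η • v) hstep
    simp only [smul_add, smul_smul, smul_zero] at h
    rw [mul_one_div_cancel hη.ne', one_smul] at h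
    linear_combination (norm := module) h
  -- Spectral decomposition of G
  have hrank : Module.finrank ℝ H = Module.finrank ℝ H := rfl
  set b := hG.eigenvectorBasis hrank with hb
  set μ := hG.eigenvalues hrank with hμ
  have hμpos : ∀ i, 0 ≤ μ i := by
    intro i
    have hGv : G (b i) = μ i • b i := hG.apply_eigenvectorBasis hrank i
    have h1 := hGpos (b i)
    rw [hGv, real_inner_smul_left, real_inner_self_eq_norm_sq, b.orthonormal.1 i] at h1
    simpa using h1
  -- Coefficientwise relation
  have coef : ∀ i, ((s + η * β) * μ i + δ) * b.repr y' i = (s * μ i + δ) * b.repr y i := by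
    intro i
    have h := congrArg (fun v : H => b.repr v i) key
    simp only [map_add, map_smul, PiLp.add_apply, PiLp.smul_apply, smul_eq_mul] at h
    rw [hG.eigenvectorBasis_apply_self_apply hrank y' i,
      hG.eigenvectorBasis_apply_self_apply hrank y i] at h
    simp only [RCLike.ofReal_real_eq_id, id_eq, ← hb, ← hμ] at h
    linear_combination h
  have habs : ∀ i, |b.repr y' i| ≤ |b.repr y i| := by
    intro i
    have h1 : 0 < s * μ i + δ := by nlinarith [mul_nonneg hs (hμpos i)]
    have h2 : 0 < (s + η * β) * μ i + δ := by nlinarith [mul_nonneg (by positivity : (0:ℝ) ≤ s + η * β) (hμpos i)]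
    have h3 : s * μ i + δ ≤ (s + η * β) * μ i + δ := by nlinarith [mul_nonneg (mul_pos hη hβ).le (hμpos i)]
    have heq : b.repr y' i = ((s * μ i + δ) / ((s + η * β) * μ i + δ)) * b.repr y i := by
      rw [div_mul_eq_mul_div, eq_div_iff h2.ne']
      linear_combination coef i
    rw [heq, abs_mul, abs_of_pos (div_pos h1 h2)]
    calc (s * μ i + δ) / ((s + η * β) * μ i + δ) * |b.repr y i|
        ≤ 1 * |b.repr y i| := by
          apply mul_le_mul_of_nonneg_right _ (abs_nonneg _)
          exact (div_le_one h2).mpr h3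
      _ = |b.repr y i| := one_mul _
  -- Conclude via Parseval
  rw [← b.repr.norm_map y', ← b.repr.norm_map y, EuclideanSpace.norm_eq, EuclideanSpace.norm_eq]
  apply Real.sqrt_le_sqrt
  apply Finset.sum_le_sum
  intro i _
  simp only [Real.norm_eq_abs]
  exact pow_le_pow_left₀ (abs_nonneg _) (habs i) 2
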